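/- Let ν ≤ 2 and let S(h) be defined by S(h)(x) = (1/(2(x+ν)p̂_ν(x)))·∫_{−ν}^x (h(t) − E[h(G(ν))]) p̂_ν(t) dt for x > −ν, where p̂_ν is the density of G(ν) and ‖h‖_∞ ≤ 1. Then |S(h)(x)| ≤ 2/(x+ν) for all x > −ν; in particular S(h)(x) → 0 as x → ∞, uniformly over all such h. -/

import Mathlib

set_option maxHeartbeats 1000000


open MeasureTheory Set

/-- The density of the centered Gamma distribution `G(ν)`:
`p̂_ν(x) = 2^{−ν/2}·Γ(ν/2)^{−1}·(x+ν)^{ν/2−1}·e^{−(x+ν)/2}` for `x > −ν`, else `0`. -/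
noncomputable def centeredGammaDens (ν x : ℝ) : ℝ :=
  if -ν < x then
    2 ^ (-ν / 2) * (Real.Gamma (ν / 2))⁻¹ * (x + ν) ^ (ν / 2 - 1) *
      Real.exp (-(x + ν) / 2)
  else 0

/-- The solution of the centered Gamma Stein equation on `(−ν,∞)`:
`S(h)(x) = (1/(2(x+ν)p̂_ν(x)))·∫_{−ν}^x (h(t) − E[h(G(ν))]) p̂_ν(t) dt`. -/
noncomputable def steinSol (ν : ℝ) (h : ℝ → ℝ) (x : ℝ) : ℝ :=
  (∫ t in (-ν)..x, (h t - ∫ s in Ioi (-ν), h s * centeredGammaDens ν s) *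
      centeredGammaDens ν t) /
    (2 * (x + ν) * centeredGammaDens ν x)

lemma abs_setIntegral_le {f : ℝ → ℝ} {s : Set ℝ} :
    |∫ t in s, f t| ≤ ∫ t in s, |f t| := by
  simpa [Real.norm_eq_abs] using
    norm_integral_le_integral_norm (μ := volume.restrict s) f

lemma centeredGammaDens_measurable (ν : ℝ) : Measurable (centeredGammaDens ν) := by
  unfold centeredGammaDens
  refine Measurable.ite (measurableSet_Ioi (a := -ν)) ?_ measurable_const
  fun_prop

lemma centeredGammaDens_nonneg {ν : ℝ} (hν0 : 0 < ν) (x : ℝ) :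
    0 ≤ centeredGammaDens ν x := by
  unfold centeredGammaDens
  split
  · rename_i hx
    have hxν : 0 < x + ν := by linarith
    have hΓ : 0 < Real.Gamma (ν / 2) := Real.Gamma_pos_of_pos (by linarith)
    positivity
  · exact le_rfl

lemma centeredGammaDens_pos {ν x : ℝ} (hν0 : 0 < ν) (hx : -ν < x) :
    0 < centeredGammaDens ν x := by
  unfold centeredGammaDens
  rw [if_pos hx]
  have hxν : 0 < x + ν := by linarith
  have hΓ : 0 < Real.Gamma (ν / 2) := Real.Gamma_pos_of_pos (by linarith)
  positivity

lemma expTail_integrableOn (ν x : ℝ) :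
    IntegrableOn (fun t : ℝ => Real.exp (-(t + ν) / 2)) (Ioi x) := by
  have e : (fun t : ℝ => Real.exp (-(t + ν) / 2))
      = fun t => Real.exp (-(1/2) * t) * Real.exp (-ν/2) := by
    funext t; rw [← Real.exp_add]; ring_nf
  rw [e]
  exact (exp_neg_integrableOn_Ioi x (by norm_num : (0:ℝ) < 1/2)).mul_const _

lemma expTail_integral (ν x : ℝ) :
    ∫ t in Ioi x, Real.exp (-(t + ν) / 2) = 2 * Real.exp (-(x + ν) / 2) := by
  have hderiv : ∀ t ∈ Ici x,
      HasDerivAt (fun t : ℝ => -2 * Real.exp (-(t + ν) / 2))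
        (Real.exp (-(t + ν) / 2)) t := by
    intro t _
    have h1 : HasDerivAt (fun t : ℝ => -(t + ν) / 2) (-1 / 2) t := by
      simpa using (((hasDerivAt_id t).add_const ν).neg.div_const 2)
    have h2 := (h1.exp).const_mul (-2 : ℝ)
    exact h2.congr_deriv (by ring)
  have htend : Filter.Tendsto (fun t : ℝ => -2 * Real.exp (-(t + ν) / 2))
      Filter.atTop (nhds 0) := by
    have h0 : Filter.Tendsto (fun t : ℝ => -(t + ν) / 2) Filter.atTop Filter.atBot := by
      apply Filter.Tendsto.atBot_div_const (by norm_num : (0:ℝ) < 2)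
      exact Filter.tendsto_neg_atTop_atBot.comp
        (Filter.tendsto_atTop_add_const_right _ ν Filter.tendsto_id)
    have := (Real.tendsto_exp_atBot.comp h0).const_mul (-2 : ℝ)
    simpa using this
  have h := integral_Ioi_of_hasDerivAt_of_tendsto' hderiv (expTail_integrableOn ν x) htend
  rw [h]
  ring

lemma centeredGammaDens_integrableOn {ν : ℝ} (hν0 : 0 < ν) :
    IntegrableOn (centeredGammaDens ν) (Ioi (-ν)) := by
  set g : ℝ → ℝ := fun u =>
    2 ^ (-ν / 2) * (Real.Gamma (ν / 2))⁻¹ * (u ^ (ν / 2 - 1) * Real.exp (-(1/2 * u)))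
    with hg
  have hIg : IntegrableOn g (Ioi 0) := by
    apply Integrable.const_mul
    have h := integrableOn_rpow_mul_exp_neg_mul_rpow (s := ν/2-1) (p := 1) (b := 1/2)
      (by linarith) (by norm_num) (by norm_num)
    apply h.congr_fun ?_ measurableSet_Ioi
    intro u hu
    simp [Real.rpow_one]
  have hpre : (fun t : ℝ => t + ν) ⁻¹' (Ioi 0) = Ioi (-ν) := by
    ext t; simp only [mem_preimage, mem_Ioi]; constructor <;> intro <;> linarith
  have hcomp : IntegrableOn (fun t : ℝ => g (t + ν)) (Ioi (-ν)) := by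
    rw [← hpre]
    exact ((measurePreserving_add_right volume ν).integrableOn_comp_preimage
      (Homeomorph.addRight ν).measurableEmbedding).mpr hIg
  apply hcomp.congr_fun ?_ measurableSet_Ioi
  intro t ht
  simp only [mem_Ioi] at ht
  have ht' : -ν < t := by linarith
  simp only [hg, centeredGammaDens, if_pos ht']
  rw [show -(1/2*(t+ν)) = -(t+ν)/2 by ring]
  ring

lemma centeredGammaDens_integral_one {ν : ℝ} (hν0 : 0 < ν) :
    ∫ x in Ioi (-ν), centeredGammaDens ν x = 1 := by
  set g : ℝ → ℝ := fun u =>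
    2 ^ (-ν / 2) * (Real.Gamma (ν / 2))⁻¹ * (u ^ (ν / 2 - 1) * Real.exp (-(1/2 * u)))
    with hg
  have hpre : (fun t : ℝ => t + ν) ⁻¹' (Ioi 0) = Ioi (-ν) := by
    ext t; simp only [mem_preimage, mem_Ioi]; constructor <;> intro <;> linarith
  have h1 : ∫ x in Ioi (-ν), centeredGammaDens ν x = ∫ t in Ioi (-ν), g (t + ν) := by
    apply setIntegral_congr_fun measurableSet_Ioi
    intro t ht
    simp only [mem_Ioi] at ht
    simp only [hg, centeredGammaDens, if_pos ht]
    rw [show -(1/2*(t+ν)) = -(t+ν)/2 by ring]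
    ring
  have h2 : ∫ t in Ioi (-ν), g (t + ν) = ∫ u in Ioi (0:ℝ), g u := by
    rw [← hpre]
    exact (measurePreserving_add_right volume ν).setIntegral_preimage_emb
      (Homeomorph.addRight ν).measurableEmbedding g (Ioi 0)
  have h3 : ∫ u in Ioi (0:ℝ), g u
      = 2 ^ (-ν / 2) * (Real.Gamma (ν / 2))⁻¹ * ((1 / (1/2 : ℝ)) ^ (ν/2) * Real.Gamma (ν/2)) := by
    simp only [hg]
    rw [integral_const_mul,
      Real.integral_rpow_mul_exp_neg_mul_Ioi (by linarith : (0:ℝ) < ν/2) (by norm_num : (0:ℝ) < 1/2)]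
  rw [h1, h2, h3]
  have hΓ : Real.Gamma (ν / 2) ≠ 0 := (Real.Gamma_pos_of_pos (by linarith)).ne'
  have h4 : (1 / (1/2 : ℝ)) = 2 := by norm_num
  rw [h4]
  have h5 : (2:ℝ) ^ (-ν/2) * (2:ℝ) ^ (ν/2) = 1 := by
    rw [← Real.rpow_add (by norm_num : (0:ℝ) < 2)]
    rw [show -ν/2 + ν/2 = (0:ℝ) by ring, Real.rpow_zero]
  calc 2 ^ (-ν / 2) * (Real.Gamma (ν / 2))⁻¹ * (2 ^ (ν / 2) * Real.Gamma (ν / 2))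
      = (2 ^ (-ν/2) * 2 ^ (ν/2)) * ((Real.Gamma (ν / 2))⁻¹ * Real.Gamma (ν / 2)) := by ring
    _ = 1 := by rw [h5, inv_mul_cancel₀ hΓ, mul_one]

/-- For `0 < ν ≤ 2` and any measurable `h` with `‖h‖_∞ ≤ 1`, the Stein solution
satisfies `|S(h)(x)| ≤ 2/(x+ν)` for all `x > −ν`; in particular `S(h)(x) → 0` as
`x → ∞`, uniformly over all such `h`. -/
theorem stein_solution_vanishing_bound (ν : ℝ) (hν0 : 0 < ν) (hν2 : ν ≤ 2) :
    (∀ h : ℝ → ℝ, Measurable h → (∀ t, |h t| ≤ 1) →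
        ∀ x : ℝ, -ν < x → |steinSol ν h x| ≤ 2 / (x + ν)) ∧
      ∀ ε : ℝ, 0 < ε → ∃ M : ℝ, ∀ x : ℝ, M ≤ x →
        ∀ h : ℝ → ℝ, Measurable h → (∀ t, |h t| ≤ 1) → |steinSol ν h x| ≤ ε := by
  have key : ∀ h : ℝ → ℝ, Measurable h → (∀ t, |h t| ≤ 1) →
      ∀ x : ℝ, -ν < x → |steinSol ν h x| ≤ 2 / (x + ν) := by
    intro h hmeas hb x hx
    set p : ℝ → ℝ := centeredGammaDens ν with hp
    set E : ℝ := ∫ s in Ioi (-ν), h s * p s with hE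
    set f : ℝ → ℝ := fun t => (h t - E) * p t with hf
    have hpint : IntegrableOn p (Ioi (-ν)) := centeredGammaDens_integrableOn hν0
    have hpone : ∫ t in Ioi (-ν), p t = 1 := centeredGammaDens_integral_one hν0
    have hpnn : ∀ t, 0 ≤ p t := centeredGammaDens_nonneg hν0
    -- integrability of h * p
    have hhp_int : IntegrableOn (fun t => h t * p t) (Ioi (-ν)) := by
      apply hpint.mono' ((hmeas.mul (centeredGammaDens_measurable ν)).aestronglyMeasurable)
      filter_upwards with t
      rw [Real.norm_eq_abs, Pi.mul_apply, abs_mul]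
      calc |h t| * |p t| ≤ 1 * |p t| := by
            apply mul_le_mul_of_nonneg_right (hb t) (abs_nonneg _)
        _ = p t := by rw [one_mul, abs_of_nonneg (hpnn t)]
    -- |E| ≤ 1
    have hEle : |E| ≤ 1 := by
      calc |E| ≤ ∫ t in Ioi (-ν), |h t * p t| := by
            exact abs_setIntegral_le
        _ ≤ ∫ t in Ioi (-ν), p t := by
            apply setIntegral_mono_on hhp_int.abs hpint measurableSet_Ioi
            intro t _
            rw [abs_mul]
            calc |h t| * |p t| ≤ 1 * |p t| :=
                  mul_le_mul_of_nonneg_right (hb t) (abs_nonneg _)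
              _ = p t := by rw [one_mul, abs_of_nonneg (hpnn t)]
        _ = 1 := hpone
    -- integrability of f
    have hf_int : IntegrableOn f (Ioi (-ν)) := by
      have : f = fun t => h t * p t - E * p t := by funext t; simp only [hf]; ring
      rw [this]
      exact hhp_int.sub (hpint.const_mul E)
    -- total integral of f is 0
    have hf_zero : ∫ t in Ioi (-ν), f t = 0 := by
      have he : f = fun t => h t * p t - E * p t := by funext t; simp only [hf]; ring
      rw [he, integral_sub hhp_int (hpint.const_mul E), integral_const_mul, hpone,
        mul_one, ← hE, sub_self]
    -- split the integral
    have hsplit : ∫ t in (-ν)..x, f t = - ∫ t in Ioi x, f t := by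
      rw [intervalIntegral.integral_of_le hx.le]
      have hu : Ioc (-ν) x ∪ Ioi x = Ioi (-ν) := Ioc_union_Ioi_eq_Ioi hx.le
      have hd : Disjoint (Ioc (-ν) x) (Ioi x) := Ioc_disjoint_Ioi le_rfl
      have := setIntegral_union hd measurableSet_Ioi
        (hf_int.mono_set Ioc_subset_Ioi_self) (hf_int.mono_set (Ioi_subset_Ioi hx.le))
      rw [hu] at this
      rw [hf_zero] at this
      linarith
    -- pointwise tail bound
    set C : ℝ := 2 ^ (-ν / 2) * (Real.Gamma (ν / 2))⁻¹ with hC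
    have hCpos : 0 < C := by
      have hΓ : 0 < Real.Gamma (ν / 2) := Real.Gamma_pos_of_pos (by linarith)
      positivity
    have hxν : 0 < x + ν := by linarith
    have hpx : p x = C * (x + ν) ^ (ν / 2 - 1) * Real.exp (-(x + ν) / 2) := by
      simp only [hp, centeredGammaDens, if_pos hx, hC]
    have hbound : ∀ t ∈ Ioi x,
        |f t| ≤ 2 * C * (x + ν) ^ (ν / 2 - 1) * Real.exp (-(t + ν) / 2) := by
      intro t ht
      simp only [mem_Ioi] at ht
      have htν : -ν < t := by linarith
      have hpt : p t = C * (t + ν) ^ (ν / 2 - 1) * Real.exp (-(t + ν) / 2) := by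
        simp only [hp, centeredGammaDens, if_pos htν, hC]
      have h1 : |f t| ≤ 2 * p t := by
        rw [hf, abs_mul, abs_of_nonneg (hpnn t)]
        apply mul_le_mul_of_nonneg_right ?_ (hpnn t)
        calc |h t - E| ≤ |h t| + |E| := abs_sub _ _
          _ ≤ 1 + 1 := add_le_add (hb t) hEle
          _ = 2 := by norm_num
      have h2 : (t + ν) ^ (ν / 2 - 1) ≤ (x + ν) ^ (ν / 2 - 1) :=
        Real.rpow_le_rpow_of_nonpos hxν (by linarith) (by linarith)
      calc |f t| ≤ 2 * p t := h1
        _ = 2 * C * (t + ν) ^ (ν / 2 - 1) * Real.exp (-(t + ν) / 2) := by rw [hpt]; ring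
        _ ≤ 2 * C * (x + ν) ^ (ν / 2 - 1) * Real.exp (-(t + ν) / 2) := by
            apply mul_le_mul_of_nonneg_right ?_ (Real.exp_pos _).le
            apply mul_le_mul_of_nonneg_left h2 (by positivity)
    -- tail integral bound
    have htail : |∫ t in Ioi x, f t| ≤ 4 * p x := by
      have hbint : IntegrableOn
          (fun t => 2 * C * (x + ν) ^ (ν / 2 - 1) * Real.exp (-(t + ν) / 2)) (Ioi x) :=
        (expTail_integrableOn ν x).const_mul _
      calc |∫ t in Ioi x, f t| ≤ ∫ t in Ioi x, |f t| := abs_setIntegral_le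
        _ ≤ ∫ t in Ioi x, 2 * C * (x + ν) ^ (ν / 2 - 1) * Real.exp (-(t + ν) / 2) := by
            apply setIntegral_mono_on ((hf_int.mono_set (Ioi_subset_Ioi hx.le)).abs)
              hbint measurableSet_Ioi hbound
        _ = 2 * C * (x + ν) ^ (ν / 2 - 1) * (2 * Real.exp (-(x + ν) / 2)) := by
            rw [integral_const_mul, expTail_integral]
        _ = 4 * p x := by rw [hpx]; ring
    -- conclude
    have hppos : 0 < p x := centeredGammaDens_pos hν0 hx
    have hD : 0 < 2 * (x + ν) * p x := by positivity
    have hnum : |∫ t in (-ν)..x, f t| ≤ 4 * p x := by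
      rw [hsplit, abs_neg]; exact htail
    have : |steinSol ν h x| = |∫ t in (-ν)..x, f t| / (2 * (x + ν) * p x) := by
      rw [steinSol, abs_div, abs_of_pos hD]
    rw [this]
    calc |∫ t in (-ν)..x, f t| / (2 * (x + ν) * p x)
        ≤ (4 * p x) / (2 * (x + ν) * p x) := by gcongr
      _ = 2 / (x + ν) := by
          rw [div_eq_div_iff hD.ne' hxν.ne']
          ring
  refine ⟨key, fun ε hε => ⟨2 / ε, fun x hxM h hm hb => ?_⟩⟩
  have hεp : (0:ℝ) < 2 / ε := by positivity
  have hx : -ν < x := by linarith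
  calc |steinSol ν h x| ≤ 2 / (x + ν) := key h hm hb x hx
    _ ≤ 2 / (2 / ε) := by gcongr; linarith
    _ = ε := by field_simp
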